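/- Bogolubov method, two-component version: Let b_{τ,e}, τ, e ∈ {+,-}, be four commuting operators with [b_{τ,e}, b*_{τ,e}] ≤ 1. Then for all real A, B₊, B₋ ≥ 0, A Σ_{τ,e} b*_{τ,e} b_{τ,e} + Σ_{e,e'} √(B_e B_{e'}) e e' ( b*_{+,e} b_{+,e'} + b*_{-,e} b_{-,e'} + b*_{+,e} b*_{-,e'} + b_{+,e} b_{-,e'} ) ≥ -(A + B₊ + B₋) + √((A + B₊ + B₋)² - (B₊ + B₋)²). -/

import Mathlib

set_option maxHeartbeats 2000000
set_option linter.all false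

open ContinuousLinearMap

section
variable {H : Type*} [NormedAddCommGroup H] [InnerProductSpace ℂ H]

lemma bogo_hself (v : H) : ((inner ℂ v v : ℂ)).re = ‖v‖^2 := by
  exact_mod_cast inner_self_eq_norm_sq (𝕜 := ℂ) v

lemma bogo_hsym (v v' : H) : ((inner ℂ v v' : ℂ)).re = ((inner ℂ v' v : ℂ)).re := by
  exact_mod_cast inner_re_symm (𝕜 := ℂ) v v'

lemma bogo_exp2 (p q : ℝ) (a c : H) :
    ‖(p:ℂ) • a + (q:ℂ) • c‖^2
      = p^2*‖a‖^2 + q^2*‖c‖^2 + 2*p*q*((inner ℂ a c : ℂ)).re := by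
  have h1 : ((inner ℂ ((p:ℂ) • a + (q:ℂ) • c) ((p:ℂ) • a + (q:ℂ) • c) : ℂ)).re
      = ‖(p:ℂ) • a + (q:ℂ) • c‖^2 := bogo_hself _
  rw [← h1]
  simp only [inner_add_left, inner_add_right, inner_smul_left, inner_smul_right,
    Complex.conj_ofReal, Complex.add_re, Complex.mul_re, Complex.ofReal_re,
    Complex.ofReal_im]
  rw [bogo_hsym c a, bogo_hself a, bogo_hself c]
  ring

lemma bogo_expInner2 (p q r s : ℝ) (a c a' c' : H) :
    ((inner ℂ ((p:ℂ)•a + (q:ℂ)•c) ((r:ℂ)•a' + (s:ℂ)•c') : ℂ)).re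
      = p*r*((inner ℂ a a' : ℂ)).re + p*s*((inner ℂ a c' : ℂ)).re
        + q*r*((inner ℂ c a' : ℂ)).re + q*s*((inner ℂ c c' : ℂ)).re := by
  simp only [inner_add_left, inner_add_right, inner_smul_left, inner_smul_right,
    Complex.conj_ofReal, Complex.add_re, Complex.mul_re, Complex.ofReal_re,
    Complex.ofReal_im]
  ring

lemma bogo_cs (p q : ℝ) (hp : 0 ≤ p) (hq : 0 ≤ q) (a c : H) :
    ‖(p:ℂ) • a + ((-q:ℝ):ℂ) • c‖^2 ≤ (p^2 + q^2) * (‖a‖^2 + ‖c‖^2) := by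
  rw [bogo_exp2]
  have hn : ‖(inner ℂ a c : ℂ)‖ ≤ ‖a‖*‖c‖ := norm_inner_le_norm a c
  have habs : |((inner ℂ a c : ℂ)).re| ≤ ‖(inner ℂ a c : ℂ)‖ := Complex.abs_re_le_norm _
  have hr2 : -(‖a‖*‖c‖) ≤ ((inner ℂ a c : ℂ)).re := by
    have := abs_le.mp (le_trans habs hn)
    exact this.1
  have key1 : 0 ≤ (p*q) * (((inner ℂ a c : ℂ)).re + ‖a‖*‖c‖) :=
    mul_nonneg (mul_nonneg hp hq) (by linarith)
  nlinarith [key1, sq_nonneg (q*‖a‖ - p*‖c‖)]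

end

theorem bogolubov_two_component
    {H : Type*} [NormedAddCommGroup H] [InnerProductSpace ℂ H] [CompleteSpace H]
    (b : Bool → Bool → H →L[ℂ] H)
    (hcomm : ∀ τ e τ' e', (τ, e) ≠ (τ', e') →
      b τ e * b τ' e' = b τ' e' * b τ e ∧
      b τ e * adjoint (b τ' e') = adjoint (b τ' e') * b τ e)
    (hccr : ∀ τ e, ∀ ψ : H,
      ((inner ℂ ψ ((b τ e * adjoint (b τ e) - adjoint (b τ e) * b τ e) ψ) : ℂ)).re
        ≤ ‖ψ‖ ^ 2)
    (A : ℝ) (B : Bool → ℝ) (hA : 0 ≤ A) (hB : ∀ e, 0 ≤ B e) :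
    ∀ ψ : H,
      (-(A + B true + B false) +
        Real.sqrt ((A + B true + B false) ^ 2 - (B true + B false) ^ 2)) * ‖ψ‖ ^ 2 ≤
      ((inner ℂ ψ
        (((A : ℂ) • (∑ τ : Bool, ∑ e : Bool, adjoint (b τ e) * b τ e) +
          ∑ e : Bool, ∑ e' : Bool,
            (((Real.sqrt (B e * B e') *
                (if e then (1:ℝ) else -1) * (if e' then (1:ℝ) else -1)) : ℝ) : ℂ) •
              (adjoint (b true e) * b true e' + adjoint (b false e) * b false e' +
                adjoint (b true e) * adjoint (b false e') + b true e * b false e'))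
          ψ) : ℂ)).re := by
  intro ψ
  have hxx : ∀ τ e e', (inner ℂ ψ ((adjoint (b τ e) * b τ e') ψ) : ℂ)
      = inner ℂ (b τ e ψ) (b τ e' ψ) := by
    intro τ e e'; rw [ContinuousLinearMap.mul_apply, adjoint_inner_right]
  have hxy : ∀ e e', (inner ℂ ψ ((adjoint (b true e) * adjoint (b false e')) ψ) : ℂ)
      = inner ℂ (b true e ψ) (adjoint (b false e') ψ) := by
    intro e e'; rw [ContinuousLinearMap.mul_apply, adjoint_inner_right]
  have hyx : ∀ e e', (inner ℂ ψ ((b true e * b false e') ψ) : ℂ)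
      = inner ℂ (adjoint (b true e) ψ) (b false e' ψ) := by
    intro e e'; rw [ContinuousLinearMap.mul_apply, ← adjoint_inner_left]
  set p := Real.sqrt (B true) with hpdef
  set q := Real.sqrt (B false) with hqdef
  have hp : 0 ≤ p := Real.sqrt_nonneg _
  have hq : 0 ≤ q := Real.sqrt_nonneg _
  have hp2 : p^2 = B true := Real.sq_sqrt (hB true)
  have hq2 : q^2 = B false := Real.sq_sqrt (hB false)
  -- the key identity
  have key : ((inner ℂ ψ
        ((((A : ℂ) • (∑ τ : Bool, ∑ e : Bool, adjoint (b τ e) * b τ e) +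
          ∑ e : Bool, ∑ e' : Bool,
            (((Real.sqrt (B e * B e') *
                (if e then (1:ℝ) else -1) * (if e' then (1:ℝ) else -1)) : ℝ) : ℂ) •
              (adjoint (b true e) * b true e' + adjoint (b false e) * b false e' +
                adjoint (b true e) * adjoint (b false e') + b true e * b false e')))
          ψ) : ℂ)).re
      = A * (‖b true true ψ‖^2 + ‖b true false ψ‖^2 + ‖b false true ψ‖^2 + ‖b false false ψ‖^2)
        + ‖(p:ℂ) • (b true true ψ) + ((-q : ℝ):ℂ) • (b true false ψ)‖^2
        + ‖(p:ℂ) • (b false true ψ) + ((-q : ℝ):ℂ) • (b false false ψ)‖^2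
        + ((inner ℂ ((p:ℂ) • (b true true ψ) + ((-q : ℝ):ℂ) • (b true false ψ))
            ((p:ℂ) • (adjoint (b false true) ψ) + ((-q : ℝ):ℂ) • (adjoint (b false false) ψ)) : ℂ)).re
        + ((inner ℂ ((p:ℂ) • (adjoint (b true true) ψ) + ((-q : ℝ):ℂ) • (adjoint (b true false) ψ))
            ((p:ℂ) • (b false true ψ) + ((-q : ℝ):ℂ) • (b false false ψ)) : ℂ)).re := by
    rw [bogo_exp2, bogo_exp2, bogo_expInner2, bogo_expInner2]
    simp only [Fintype.sum_bool, if_true, if_false, Bool.false_eq_true, ite_false, ite_true,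
      Real.sqrt_mul (hB true), Real.sqrt_mul (hB false), ← hpdef, ← hqdef,
      add_apply, smul_apply, inner_add_right, inner_smul_right,
      hxx, hxy, hyx,
      Complex.add_re, Complex.mul_re, Complex.ofReal_re, Complex.ofReal_im,
      bogo_hself]
    rw [bogo_hsym (b true false ψ) (b true true ψ), bogo_hsym (b false false ψ) (b false true ψ)]
    ring
  -- single-mode commutator bounds
  have hcs : ∀ τ e, ‖adjoint (b τ e) ψ‖^2 ≤ ‖b τ e ψ‖^2 + ‖ψ‖^2 := by
    intro τ e
    have h := hccr τ e ψ
    have e1 : (inner ℂ ψ ((b τ e * adjoint (b τ e)) ψ) : ℂ)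
        = inner ℂ (adjoint (b τ e) ψ) (adjoint (b τ e) ψ) := by
      rw [ContinuousLinearMap.mul_apply, ← adjoint_inner_left]
    have e2 := hxx τ e e
    rw [sub_apply, inner_sub_right, e1, e2, Complex.sub_re, bogo_hself, bogo_hself] at h
    linarith
  -- cross commutation
  have hyyxx : ∀ τ, ((inner ℂ (adjoint (b τ true) ψ) (adjoint (b τ false) ψ) : ℂ)).re
      = ((inner ℂ (b τ true ψ) (b τ false ψ) : ℂ)).re := by
    intro τ
    have hc := (hcomm τ true τ false (by simp)).2
    have h1 : (inner ℂ ψ ((b τ true * adjoint (b τ false)) ψ) : ℂ)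
        = inner ℂ (adjoint (b τ true) ψ) (adjoint (b τ false) ψ) := by
      rw [ContinuousLinearMap.mul_apply, ← adjoint_inner_left]
    have h2 := hxx τ false true
    rw [← h1, hc, h2, bogo_hsym]
  -- commutator bound for the combined modes
  have HW : ∀ τ, ‖(p:ℂ) • (adjoint (b τ true) ψ) + ((-q:ℝ):ℂ) • (adjoint (b τ false) ψ)‖^2
      ≤ ‖(p:ℂ) • (b τ true ψ) + ((-q:ℝ):ℂ) • (b τ false ψ)‖^2 + (B true + B false)*‖ψ‖^2 := by
    intro τ
    have hBtpq : B true + B false = p^2 + q^2 := by rw [hp2, hq2]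
    rw [bogo_exp2, bogo_exp2, hyyxx τ, hBtpq]
    have h1 := mul_le_mul_of_nonneg_left (hcs τ true) (sq_nonneg p)
    have h2 := mul_le_mul_of_nonneg_left (hcs τ false) (sq_nonneg q)
    nlinarith [h1, h2]
  -- Cauchy-Schwarz bound for the combined modes
  have HC : ∀ τ, ‖(p:ℂ) • (b τ true ψ) + ((-q:ℝ):ℂ) • (b τ false ψ)‖^2
      ≤ (B true + B false) * (‖b τ true ψ‖^2 + ‖b τ false ψ‖^2) := by
    intro τ
    have hBtpq : B true + B false = p^2 + q^2 := by rw [hp2, hq2]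
    rw [hBtpq]
    exact bogo_cs p q hp hq _ _
  have HWt := HW true
  have HWf := HW false
  have HCt := HC true
  have HCf := HC false
  rcases eq_or_lt_of_le (add_nonneg (hB true) (hB false)) with hz | hBt
  · -- B true + B false = 0
    have hb1 : B true = 0 := by linarith [hB true, hB false]
    have hb2 : B false = 0 := by linarith [hB true, hB false]
    have hp0 : p = 0 := by rw [hpdef, hb1, Real.sqrt_zero]
    have hq0 : q = 0 := by rw [hqdef, hb2, Real.sqrt_zero]
    have htgt : (-(A + B true + B false) +
        Real.sqrt ((A + B true + B false) ^ 2 - (B true + B false) ^ 2)) * ‖ψ‖ ^ 2 = 0 := by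
      rw [hb1, hb2]
      norm_num [Real.sqrt_sq hA]
    rw [htgt, key, hp0, hq0]
    simp only [Complex.ofReal_zero, neg_zero, zero_smul, add_zero, norm_zero,
      inner_zero_left, inner_zero_right, Complex.zero_re]
    positivity
  · -- B true + B false > 0
    set Bt := B true + B false with hBtdef
    set c := A + B true + B false with hcdef
    set s := Real.sqrt ((A + B true + B false) ^ 2 - (B true + B false) ^ 2) with hsdef
    have hcBt : c = A + Bt := by rw [hcdef, hBtdef]; ring
    have hcpos : 0 < c := by rw [hcBt]; linarith
    have hs0 : 0 ≤ s := Real.sqrt_nonneg _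
    have hss : s^2 = c^2 - Bt^2 := by
      rw [hsdef]
      exact Real.sq_sqrt (by nlinarith)
    have hsc : s < c := by nlinarith
    set l := (c - s)/Bt with hldef
    have hl0 : 0 < l := div_pos (by linarith) hBt
    have hlB : l * Bt = c - s := div_mul_cancel₀ _ (ne_of_gt hBt)
    have hl2 : Bt * (1 + l^2) = 2*l*c := by
      have h1 : (l*Bt)*(l*Bt) = (c-s)*(c-s) := by rw [hlB]
      have h2 : c*(l*Bt) = c*(c-s) := by rw [hlB]
      have h' : (Bt * (1 + l^2)) * Bt = (2*l*c) * Bt := by nlinarith [h1, h2, hss]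
      exact mul_right_cancel₀ (ne_of_gt hBt) h'
    -- abbreviations
    clear hxx hxy hyx hcs hyyxx hcomm hccr HW HC hp2 hq2 hpdef hqdef hldef hsdef hcdef hBtdef
    set xtt := b true true ψ
    set xtf := b true false ψ
    set xft := b false true ψ
    set xff := b false false ψ
    set ytt := adjoint (b true true) ψ
    set ytf := adjoint (b true false) ψ
    set yft := adjoint (b false true) ψ
    set yff := adjoint (b false false) ψ
    set ut := (p:ℂ) • xtt + ((-q : ℝ):ℂ) • xtf with hut
    set uf := (p:ℂ) • xft + ((-q : ℝ):ℂ) • xff with huf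
    set wt := (p:ℂ) • ytt + ((-q : ℝ):ℂ) • ytf with hwt
    set wf := (p:ℂ) • yft + ((-q : ℝ):ℂ) • yff with hwf
    -- square expansions
    have Hsq1 : 0 ≤ ‖ut‖^2 + l^2*‖wf‖^2 + 2*l*((inner ℂ ut wf : ℂ)).re := by
      have h := bogo_exp2 (1:ℝ) l ut wf
      simp only [Complex.ofReal_one, one_smul, one_pow, one_mul, mul_one] at h
      rw [← h]; positivity
    have Hsq2 : 0 ≤ ‖uf‖^2 + l^2*‖wt‖^2 + 2*l*((inner ℂ wt uf : ℂ)).re := by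
      have h := bogo_exp2 (1:ℝ) l uf wt
      simp only [Complex.ofReal_one, one_smul, one_pow, one_mul, mul_one] at h
      rw [bogo_hsym wt uf, ← h]; positivity
    rw [key]
    have hP : (0:ℝ) ≤ ‖ψ‖^2 := sq_nonneg _
    have hSb : (0:ℝ) ≤ ‖xtt‖^2 + ‖xtf‖^2 + ‖xft‖^2 + ‖xff‖^2 := by positivity
    have HCsum : ‖ut‖^2 + ‖uf‖^2 ≤ Bt * (‖xtt‖^2 + ‖xtf‖^2 + ‖xft‖^2 + ‖xff‖^2) := by
      linarith [HCt, HCf]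
    have E2 : l^2*‖wf‖^2 ≤ l^2*(‖uf‖^2 + Bt*‖ψ‖^2) := mul_le_mul_of_nonneg_left HWf (sq_nonneg l)
    have E2' : l^2*‖wt‖^2 ≤ l^2*(‖ut‖^2 + Bt*‖ψ‖^2) := mul_le_mul_of_nonneg_left HWt (sq_nonneg l)
    have E5 : (1-l)^2*(‖ut‖^2 + ‖uf‖^2) ≤ (1-l)^2*(Bt*(‖xtt‖^2 + ‖xtf‖^2 + ‖xft‖^2 + ‖xff‖^2)) :=
      mul_le_mul_of_nonneg_left HCsum (sq_nonneg (1-l))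
    have hl2' : Bt*(1+l^2) = 2*l*(A+Bt) := by rw [hl2, hcBt]
    have E6 : (‖xtt‖^2 + ‖xtf‖^2 + ‖xft‖^2 + ‖xff‖^2)*(Bt*(1+l^2))
        = (‖xtt‖^2 + ‖xtf‖^2 + ‖xft‖^2 + ‖xff‖^2)*(2*l*(A+Bt)) := by rw [hl2']
    have E7 : ‖ψ‖^2*(l*(c-s)) = ‖ψ‖^2*(l*(l*Bt)) := by rw [← hlB]
    have H2l : 2*l*((-c + s)*‖ψ‖^2)
        ≤ 2*l*(A * (‖xtt‖^2 + ‖xtf‖^2 + ‖xft‖^2 + ‖xff‖^2) + ‖ut‖^2 + ‖uf‖^2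
            + ((inner ℂ ut wf : ℂ)).re + ((inner ℂ wt uf : ℂ)).re) := by
      linarith [Hsq1, Hsq2, E2, E2', E5, E6, E7, hP, hSb, hl0]
    have hfin := (mul_le_mul_iff_of_pos_left (by positivity : (0:ℝ) < 2*l)).mp H2l
    linarith [hfin]
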